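/- Let K be a field of characteristic zero equipped with a δ-operator d (an additive map d : K → K with d(xy) = d(x)y + x d(y)), and let L be a finite field extension of K. Then there exists a unique δ-operator D : L → L (additive, with D(xy) = D(x)y + x D(y) for all x, y ∈ L) extending d, i.e., satisfying D(a) = d(a) for all a in the image of K in L. Thus any finite field extension of a differential field of characteristic zero uniquely turns into an extension of differential fields. -/

import Mathlib

open Polynomial

theorem stmt_18 {K : Type*} [Field K] [CharZero K]
    (d : K → K) (hadd : ∀ x y : K, d (x + y) = d x + d y)
    (hmul : ∀ x y : K, d (x * y) = d x * y + x * d y)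
    {L : Type*} [Field L] [Algebra K L] [FiniteDimensional K L] :
    ∃! D : L → L,
      (∀ x y : L, D (x + y) = D x + D y) ∧
      (∀ x y : L, D (x * y) = D x * y + x * D y) ∧
      (∀ a : K, D (algebraMap K L a) = algebraMap K L (d a)) := by
  classical
  have h1K : d 1 = 0 := by
    have := hmul 1 1
    simp at this
    exact this
  letI : Differential K :=
    ⟨{ toLinearMap := (AddMonoidHom.mk' d hadd).toIntLinearMap
       map_one_eq_zero' := h1K
       leibniz' := fun a b => by
         simp only [AddMonoidHom.coe_toIntLinearMap, smul_eq_mul]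
         show d (a * b) = a * d b + b * d a
         rw [hmul]; ring }⟩
  haveI : Algebra.IsSeparable K L := inferInstance
  obtain ⟨α, hα⟩ := Field.exists_primitive_element K L
  have hint : IsIntegral K α := IsIntegral.of_finite K α
  have hadj : Algebra.adjoin K {α} = ⊤ := by
    have h := IntermediateField.adjoin_simple_toSubalgebra_of_isAlgebraic hint.isAlgebraic
    rw [hα] at h
    rw [← h, IntermediateField.top_toSubalgebra]
  have surj : ∀ x : L, ∃ q : K[X], aeval α q = x := by
    intro x
    have hx : x ∈ (aeval α : K[X] →ₐ[K] L).range := by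
      rw [← Algebra.adjoin_singleton_eq_range_aeval, hadj]; trivial
    exact hx
  set p : K[X] := minpoly K α with hp
  have hpa : aeval α p = 0 := minpoly.aeval K α
  have hsep : IsSeparable K α := Algebra.IsSeparable.isSeparable K α
  have hp' : aeval α (derivative p) ≠ 0 :=
    hsep.aeval_derivative_ne_zero (minpoly.aeval K α)
  obtain ⟨v, hv⟩ := surj (- aeval α (Differential.mapCoeffs p) / aeval α (derivative p))
  have hveq : aeval α (Differential.mapCoeffs p) + aeval α v * aeval α (derivative p) = 0 := by
    rw [hv]; field_simp; ring
  have hDp : aeval α (Differential.implicitDeriv v p) = 0 := by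
    simp only [Differential.implicitDeriv, Derivation.add_apply, Derivation.smul_apply,
      Derivation.coe_restrictScalars, smul_eq_mul, map_add, map_mul]
    rw [show (derivative' : Derivation K K[X] K[X]) p = derivative p from rfl]
    exact hveq
  have hzero : ∀ q : K[X], aeval α q = 0 → aeval α (Differential.implicitDeriv v q) = 0 := by
    intro q hq
    obtain ⟨r, hr⟩ := minpoly.dvd K α hq
    rw [← hp] at hr
    subst hr
    rw [Derivation.leibniz]
    simp only [smul_eq_mul, map_add, map_mul, hpa, hDp, mul_zero, zero_mul, add_zero, zero_add]
  set D : L → L := fun x => aeval α (Differential.implicitDeriv v (Classical.choose (surj x)))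
    with hDdef
  have hD : ∀ q : K[X], D (aeval α q) = aeval α (Differential.implicitDeriv v q) := by
    intro q
    have h0 : aeval α (Classical.choose (surj (aeval α q))) = aeval α q :=
      Classical.choose_spec (surj (aeval α q))
    have h1 := hzero (Classical.choose (surj (aeval α q)) - q) (by rw [map_sub, h0, sub_self])
    rw [map_sub, map_sub] at h1
    exact sub_eq_zero.mp h1
  refine ⟨D, ⟨?_, ?_, ?_⟩, ?_⟩
  · intro x y
    obtain ⟨q1, rfl⟩ := surj x
    obtain ⟨q2, rfl⟩ := surj y
    rw [← map_add, hD, hD, hD, map_add, map_add]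
  · intro x y
    obtain ⟨q1, rfl⟩ := surj x
    obtain ⟨q2, rfl⟩ := surj y
    rw [← map_mul, hD, hD, hD, Derivation.leibniz]
    simp only [smul_eq_mul, map_add, map_mul]
    ring
  · intro a
    have h : algebraMap K L a = aeval α (C a) := by simp
    rw [h, hD, Differential.implicitDeriv_C]
    simp only [aeval_C]
    rfl
  · intro D' ⟨h1, h2, h3⟩
    have h1L : D' 1 = 0 := by
      have := h2 1 1
      simp at this
      exact this
    letI : Differential L :=
      ⟨{ toLinearMap := (AddMonoidHom.mk' D' h1).toIntLinearMap
         map_one_eq_zero' := h1L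
         leibniz' := fun a b => by
           simp only [AddMonoidHom.coe_toIntLinearMap, smul_eq_mul]
           show D' (a * b) = a * D' b + b * D' a
           rw [h2]; ring }⟩
    haveI : DifferentialAlgebra K L := ⟨h3⟩
    have hαv : (Differential.deriv α : L) = aeval α v := by
      have h0 := Differential.deriv_aeval_eq α p
      rw [hpa, map_zero] at h0
      apply mul_left_cancel₀ hp'
      linear_combination -h0 - hveq
    funext x
    obtain ⟨q, rfl⟩ := surj x
    rw [hD q, ← Differential.deriv_aeval_eq_implicitDeriv α v hαv q]
    rfl
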